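/- Suppose x^{k+1} = Aᵏ xᵏ + Δᵏ where each Aᵏ is doubly stochastic with σ₂(Aᵏ) ≤ λ < 1, and Δᵏ → 0 as k → ∞. Then the deviation from the mean e^k = x^k − ((𝟏ᵀx^k)/n)𝟏 converges to 0. -/

import Mathlib

open Filter

/-- Euclidean norm of a vector in ℝⁿ. -/
noncomputable def l2norm {n : ℕ} (v : Fin n → ℝ) : ℝ := Real.sqrt (∑ i, v i ^ 2)

/-- The second-largest singular value of a doubly stochastic matrix: the operator norm of
`A` restricted to the subspace orthogonal to the all-ones vector. -/
noncomputable def sigma2 {n : ℕ} (A : Matrix (Fin n) (Fin n) ℝ) : ℝ :=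
  sSup {r | ∃ y : Fin n → ℝ, (∑ i, y i = 0) ∧ l2norm y = 1 ∧ r = l2norm (A.mulVec y)}

noncomputable def toE {n : ℕ} (v : Fin n → ℝ) : EuclideanSpace ℝ (Fin n) :=
  (WithLp.equiv 2 _).symm v

lemma l2norm_eq {n : ℕ} (v : Fin n → ℝ) : l2norm v = ‖toE v‖ := by
  simp [l2norm, toE, EuclideanSpace.norm_eq, Real.norm_eq_abs, sq_abs]

lemma l2norm_nonneg' {n : ℕ} (v : Fin n → ℝ) : 0 ≤ l2norm v := Real.sqrt_nonneg _

lemma l2norm_smul {n : ℕ} (c : ℝ) (a : Fin n → ℝ) : l2norm (c • a) = |c| * l2norm a := by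
  simp only [l2norm_eq]
  show ‖c • toE a‖ = _
  rw [norm_smul, Real.norm_eq_abs]

lemma l2norm_add_le {n : ℕ} (a b : Fin n → ℝ) : l2norm (a + b) ≤ l2norm a + l2norm b := by
  simp only [l2norm_eq]
  exact norm_add_le (toE a) (toE b)

lemma sq_sum_nonneg {n : ℕ} (v : Fin n → ℝ) : 0 ≤ ∑ i, v i ^ 2 :=
  Finset.sum_nonneg fun i _ => sq_nonneg _

lemma l2norm_sq {n : ℕ} (v : Fin n → ℝ) : l2norm v ^ 2 = ∑ i, v i ^ 2 :=
  Real.sq_sqrt (sq_sum_nonneg v)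

lemma mulVec_le_frob {n : ℕ} (A : Matrix (Fin n) (Fin n) ℝ) (u : Fin n → ℝ)
    (hu : l2norm u = 1) :
    l2norm (A.mulVec u) ≤ Real.sqrt (∑ i, ∑ j, A i j ^ 2) := by
  have hsum : ∑ i, u i ^ 2 = 1 := by
    have h := l2norm_sq u; rw [hu] at h; linarith
  unfold l2norm
  apply Real.sqrt_le_sqrt
  calc ∑ i, (A.mulVec u) i ^ 2 ≤ ∑ i, (∑ j, A i j ^ 2) * (∑ j, u j ^ 2) := by
        apply Finset.sum_le_sum
        intro i _
        exact Finset.sum_mul_sq_le_sq_mul_sq (R := ℝ) Finset.univ (fun j => A i j) u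
    _ = ∑ i, ∑ j, A i j ^ 2 := by rw [hsum]; simp

lemma key_spectral {n : ℕ} (A : Matrix (Fin n) (Fin n) ℝ) (y : Fin n → ℝ)
    (hy : ∑ i, y i = 0) :
    l2norm (A.mulVec y) ≤ sigma2 A * l2norm y := by
  by_cases h0 : y = 0
  · simp [h0, Matrix.mulVec_zero, l2norm]
  · have hpos : 0 < l2norm y := by
      rcases lt_or_eq_of_le (l2norm_nonneg' y) with h | h
      · exact h
      · exfalso; apply h0
        have hz : ∑ i, y i ^ 2 = 0 := by
          have := l2norm_sq y; rw [← h] at this; simpa using this.symm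
        funext i
        have := (Finset.sum_eq_zero_iff_of_nonneg (fun i _ => sq_nonneg (y i))).1 hz i
          (Finset.mem_univ i)
        exact pow_eq_zero_iff (by norm_num) |>.1 this
    set c := l2norm y with hc
    set u := c⁻¹ • y with hu
    have hsumu : ∑ i, u i = 0 := by
      simp [hu, ← Finset.mul_sum, hy]
    have hnormu : l2norm u = 1 := by
      rw [hu, l2norm_smul, abs_of_pos (inv_pos.2 hpos)]
      field_simp
      exact hc.symm
    have hmem : l2norm (A.mulVec u) ∈
        {r | ∃ y : Fin n → ℝ, (∑ i, y i = 0) ∧ l2norm y = 1 ∧ r = l2norm (A.mulVec y)} :=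
      ⟨u, hsumu, hnormu, rfl⟩
    have hbdd : BddAbove {r | ∃ y : Fin n → ℝ, (∑ i, y i = 0) ∧ l2norm y = 1 ∧
        r = l2norm (A.mulVec y)} := by
      refine ⟨Real.sqrt (∑ i, ∑ j, A i j ^ 2), ?_⟩
      rintro r ⟨z, _, hz1, rfl⟩
      exact mulVec_le_frob A z hz1
    have hle : l2norm (A.mulVec u) ≤ sigma2 A := le_csSup hbdd hmem
    have hAy : A.mulVec y = c • A.mulVec u := by
      rw [hu, Matrix.mulVec_smul, smul_smul, mul_inv_cancel₀ (ne_of_gt hpos), one_smul]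
    rw [hAy, l2norm_smul, abs_of_pos hpos]
    calc c * l2norm (A.mulVec u) ≤ c * sigma2 A :=
          mul_le_mul_of_nonneg_left hle (le_of_lt hpos)
      _ = sigma2 A * c := mul_comm _ _

lemma aux_tendsto (lam : ℝ) (h0 : 0 ≤ lam) (h1 : lam < 1) (a b : ℕ → ℝ)
    (ha : ∀ k, 0 ≤ a k) (hrec : ∀ k, a (k + 1) ≤ lam * a k + b k)
    (hb : Tendsto b atTop (nhds 0)) : Tendsto a atTop (nhds 0) := by
  rw [Metric.tendsto_atTop]
  intro ε hε
  have h1l : 0 < 1 - lam := by linarith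
  set c := ε * (1 - lam) / 2 with hcdef
  have hc : 0 < c := by positivity
  obtain ⟨N, hN⟩ := (Metric.tendsto_atTop.1 hb) c hc
  have hbN : ∀ k ≥ N, b k ≤ c := by
    intro k hk
    have := hN k hk
    rw [Real.dist_eq, sub_zero] at this
    exact le_of_lt (lt_of_abs_lt this)
  have claim : ∀ m, a (N + m) ≤ lam ^ m * a N + c / (1 - lam) := by
    intro m
    induction m with
    | zero => simp; positivity
    | succ m ih =>
      have hr := hrec (N + m)
      have hbb := hbN (N + m) (Nat.le_add_right _ _)
      have hstep : a (N + (m + 1)) ≤ lam * a (N + m) + c := by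
        rw [← Nat.add_assoc]; linarith
      calc a (N + (m + 1)) ≤ lam * (lam ^ m * a N + c / (1 - lam)) + c := by
            nlinarith [mul_le_mul_of_nonneg_left ih h0]
        _ ≤ lam ^ (m + 1) * a N + c / (1 - lam) := by
            rw [pow_succ]
            have heq : lam * (c / (1 - lam)) + c = c / (1 - lam) := by
              field_simp
              ring
            nlinarith [heq]
  have hcl : c / (1 - lam) = ε / 2 := by
    rw [hcdef]; field_simp
  have hpow : Tendsto (fun m => lam ^ m * a N) atTop (nhds 0) := by
    have := tendsto_pow_atTop_nhds_zero_of_lt_one h0 h1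
    simpa using this.mul_const (a N)
  obtain ⟨M, hM⟩ := (Metric.tendsto_atTop.1 hpow) (ε / 2) (by positivity)
  refine ⟨N + M, fun k hk => ?_⟩
  have hkN : N ≤ k := le_trans (Nat.le_add_right _ _) hk
  have hmM : M ≤ k - N := by omega
  have hkey := claim (k - N)
  rw [Nat.add_sub_cancel' hkN] at hkey
  have hp := hM (k - N) hmM
  rw [Real.dist_eq, sub_zero] at hp ⊢
  have hpw : lam ^ (k - N) * a N < ε / 2 := lt_of_abs_lt hp
  rw [abs_of_nonneg (ha k)]
  rw [hcl] at hkey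
  linarith

lemma l2norm_continuous {n : ℕ} : Continuous (l2norm (n := n)) := by
  unfold l2norm
  exact Real.continuous_sqrt.comp
    (continuous_finset_sum _ fun i _ => (continuous_apply i).pow 2)

theorem perturbed_consensus_vanishing (n : ℕ) (hn : 0 < n)
    (A : ℕ → Matrix (Fin n) (Fin n) ℝ)
    (hnonneg : ∀ k i j, 0 ≤ A k i j)
    (hrow : ∀ k i, ∑ j, A k i j = 1)
    (hcol : ∀ k j, ∑ i, A k i j = 1)
    (lam : ℝ) (hlam0 : 0 ≤ lam) (hlam1 : lam < 1)
    (hσ : ∀ k, sigma2 (A k) ≤ lam)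
    (Δ x : ℕ → Fin n → ℝ)
    (hΔ : Tendsto Δ atTop (nhds 0))
    (hx : ∀ k, x (k + 1) = (A k).mulVec (x k) + Δ k) :
    Tendsto (fun k => x k - fun _ => (∑ i, x k i) / n) atTop (nhds 0) := by
  have hn' : (n : ℝ) ≠ 0 := Nat.cast_ne_zero.2 hn.ne'
  set e : ℕ → Fin n → ℝ := fun k => x k - fun _ => (∑ i, x k i) / n with he
  set g : ℕ → Fin n → ℝ := fun k => Δ k - fun _ => (∑ i, Δ k i) / n with hg
  -- sum of e is zero
  have hsume : ∀ k, ∑ i, e k i = 0 := by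
    intro k
    simp only [he, Pi.sub_apply]
    rw [Finset.sum_sub_distrib, Finset.sum_const, Finset.card_univ, Fintype.card_fin]
    rw [nsmul_eq_mul]
    field_simp
    ring
  -- recursion for e
  have herec : ∀ k, e (k + 1) = (A k).mulVec (e k) + g k := by
    intro k
    have hmeansum : ∑ i, x (k + 1) i = (∑ i, x k i) + ∑ i, Δ k i := by
      rw [hx k]
      simp only [Pi.add_apply]
      rw [Finset.sum_add_distrib]
      congr 1
      unfold Matrix.mulVec dotProduct
      rw [Finset.sum_comm]
      simp_rw [← Finset.sum_mul, hcol, one_mul]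
    funext i
    have hAone : ((A k).mulVec (fun _ => (∑ i, x k i) / n)) i = (∑ i, x k i) / n := by
      unfold Matrix.mulVec dotProduct
      rw [← Finset.sum_mul, hrow, one_mul]
    have hAe : ((A k).mulVec (e k)) i
        = ((A k).mulVec (x k)) i - (∑ i, x k i) / n := by
      have : (A k).mulVec (e k)
          = (A k).mulVec (x k) - (A k).mulVec (fun _ => (∑ i, x k i) / n) := by
        rw [he]
        simp only
        rw [Matrix.mulVec_sub]
      rw [this]
      simp [hAone]
    simp only [Pi.add_apply, hAe]
    simp only [he, hg, Pi.add_apply, Pi.sub_apply]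
    rw [hmeansum, hx k]
    simp only [Pi.add_apply]
    ring
  -- norm recursion
  have hnormrec : ∀ k, l2norm (e (k + 1)) ≤ lam * l2norm (e k) + l2norm (g k) := by
    intro k
    rw [herec k]
    calc l2norm ((A k).mulVec (e k) + g k)
        ≤ l2norm ((A k).mulVec (e k)) + l2norm (g k) := l2norm_add_le _ _
      _ ≤ lam * l2norm (e k) + l2norm (g k) := by
          have h1 := key_spectral (A k) (e k) (hsume k)
          have h2 : sigma2 (A k) * l2norm (e k) ≤ lam * l2norm (e k) :=
            mul_le_mul_of_nonneg_right (hσ k) (l2norm_nonneg' _)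
          linarith
  -- g tends to zero
  have hgtend : Tendsto g atTop (nhds 0) := by
    have hcomp : ∀ i : Fin n, Tendsto (fun k => Δ k i) atTop (nhds 0) := by
      intro i
      have := tendsto_pi_nhds.1 hΔ i
      simpa using this
    have hsumΔ : Tendsto (fun k => ∑ i, Δ k i) atTop (nhds 0) := by
      have := tendsto_finset_sum (Finset.univ : Finset (Fin n))
        (fun i _ => hcomp i)
      simpa using this
    have hmean : Tendsto (fun k => (fun _ : Fin n => (∑ i, Δ k i) / n)) atTop (nhds 0) := by
      rw [tendsto_pi_nhds]
      intro i
      simpa using hsumΔ.div_const (n : ℝ)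
    have := hΔ.sub hmean
    simpa [hg] using this
  have hgl2 : Tendsto (fun k => l2norm (g k)) atTop (nhds 0) := by
    have h0 : l2norm (0 : Fin n → ℝ) = 0 := by simp [l2norm]
    have := (l2norm_continuous.tendsto 0).comp hgtend
    rwa [h0] at this
  -- l2norm e tends to zero
  have hel2 : Tendsto (fun k => l2norm (e k)) atTop (nhds 0) :=
    aux_tendsto lam hlam0 hlam1 _ _ (fun k => l2norm_nonneg' _) hnormrec hgl2
  -- conclude componentwise
  rw [tendsto_pi_nhds]
  intro i
  have hbound : ∀ k, ‖e k i‖ ≤ l2norm (e k) := by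
    intro k
    rw [Real.norm_eq_abs, ← Real.sqrt_sq_eq_abs (e k i)]
    exact Real.sqrt_le_sqrt (Finset.single_le_sum (fun j _ => sq_nonneg (e k j))
      (Finset.mem_univ i))
  have := squeeze_zero_norm hbound hel2
  simpa [he] using this
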